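/- Let V be an n-dimensional real vector space, let (F,G,H) be a transverse triple of complete flags in V, and let i,j,k,i',j',k' ∈ {0,…,n−1} be integers with i+j+k = n = i'+j'+k'. Then tr(A^{i,j,k}_{F,G,H} ∘ A^{i',j',k'}_{F,G,H}) = min(i,i') − (i·i')/n. In particular this trace does not depend on F, G, H. -/

import Mathlib

/-- `F` is a complete flag in an `n`-dimensional real vector space:
`F 0 ⊆ F 1 ⊆ ⋯ ⊆ F n` with `dim (F l) = l` for `0 ≤ l ≤ n`. -/
def IsFlag (n : ℕ) {V : Type*} [AddCommGroup V] [Module ℝ V]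
    (F : ℕ → Submodule ℝ V) : Prop :=
  (∀ l, l < n → F l ≤ F (l + 1)) ∧ ∀ l, l ≤ n → Module.finrank ℝ (F l) = l

/-- A triple of flags is transverse if `F a + G b + H c = V` whenever `a + b + c = n`. -/
def TransverseTriple (n : ℕ) {V : Type*} [AddCommGroup V] [Module ℝ V]
    (F G H : ℕ → Submodule ℝ V) : Prop :=
  ∀ a b c : ℕ, a + b + c = n → F a ⊔ G b ⊔ H c = ⊤

/-- A pair of flags is transverse if `F a + G (n - a) = V` for all `0 ≤ a ≤ n`. -/
def TransversePair (n : ℕ) {V : Type*} [AddCommGroup V] [Module ℝ V]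
    (F G : ℕ → Submodule ℝ V) : Prop :=
  ∀ a, a ≤ n → F a ⊔ G (n - a) = ⊤

/-- `A` is the `(i,j,k)`-eruption endomorphism of the triple `(F,G,H)`: it acts as the
scalar `(n - i)/n` on `F i` and as the scalar `-i/n` on `G j + H k`. -/
def IsEruption (n i j k : ℕ) {V : Type*} [AddCommGroup V] [Module ℝ V]
    (F G H : ℕ → Submodule ℝ V) (A : Module.End ℝ V) : Prop :=
  (∀ v ∈ F i, A v = (((n : ℝ) - (i : ℝ)) / (n : ℝ)) • v) ∧
  (∀ v ∈ G j ⊔ H k, A v = (-(i : ℝ) / (n : ℝ)) • v)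

/-- `A` is the `(i, n-i)`-shearing endomorphism of the pair `(F,G)`: it acts as the
scalar `(n - i)/n` on `F i` and as the scalar `-i/n` on `G (n - i)`. -/
def IsShearing (n i : ℕ) {V : Type*} [AddCommGroup V] [Module ℝ V]
    (F G : ℕ → Submodule ℝ V) (A : Module.End ℝ V) : Prop :=
  (∀ v ∈ F i, A v = (((n : ℝ) - (i : ℝ)) / (n : ℝ)) • v) ∧
  (∀ v ∈ G (n - i), A v = (-(i : ℝ) / (n : ℝ)) • v)

private lemma flag_mono {n : ℕ} {V : Type*} [AddCommGroup V] [Module ℝ V]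
    {F : ℕ → Submodule ℝ V} (hF : IsFlag n F) {a b : ℕ} (hab : a ≤ b) (hb : b ≤ n) :
    F a ≤ F b := by
  induction b with
  | zero => simp [Nat.le_zero.mp hab]
  | succ m ih =>
    rcases Nat.lt_or_ge a (m+1) with h | h
    · exact le_trans (ih (by omega) (by omega)) (hF.1 m (by omega))
    · have : a = m + 1 := by omega
      subst this; exact le_rfl

private lemma eruption_proj {n : ℕ} {V : Type*} [AddCommGroup V] [Module ℝ V]
    {F G H : ℕ → Submodule ℝ V} (hFGH : TransverseTriple n F G H)
    {i j k : ℕ} (hi : i < n) (hijk : i + j + k = n)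
    (A : Module.End ℝ V) (hA : IsEruption n i j k F G H A) :
    LinearMap.IsProj (F i) (A + ((i : ℝ) / (n : ℝ)) • (1 : Module.End ℝ V)) := by
  have hn : (n : ℝ) ≠ 0 := Nat.cast_ne_zero.mpr (by omega)
  set P : Module.End ℝ V := A + ((i : ℝ) / (n : ℝ)) • (1 : Module.End ℝ V) with hP
  have hPF : ∀ v ∈ F i, P v = v := by
    intro v hv
    have h1 : P v = A v + ((i : ℝ) / (n : ℝ)) • v := rfl
    rw [h1, hA.1 v hv, ← add_smul]
    have : ((n : ℝ) - (i : ℝ)) / (n : ℝ) + (i : ℝ) / (n : ℝ) = 1 := by field_simp; ring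
    rw [this, one_smul]
  have hPW : ∀ v ∈ G j ⊔ H k, P v = 0 := by
    intro v hv
    have h1 : P v = A v + ((i : ℝ) / (n : ℝ)) • v := rfl
    rw [h1, hA.2 v hv, ← add_smul]
    have : -(i : ℝ) / (n : ℝ) + (i : ℝ) / (n : ℝ) = 0 := by ring
    rw [this, zero_smul]
  have hsup : F i ⊔ (G j ⊔ H k) = ⊤ := by
    rw [← sup_assoc]; exact hFGH i j k hijk
  refine ⟨?_, hPF⟩
  intro v
  have hv : v ∈ F i ⊔ (G j ⊔ H k) := by rw [hsup]; trivial
  rcases Submodule.mem_sup.mp hv with ⟨f, hf, w, hw, h⟩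
  have : P v = f := by rw [← h, map_add, hPF f hf, hPW w hw, add_zero]
  rw [this]; exact hf

private lemma trace_key {n : ℕ} {V : Type*} [AddCommGroup V] [Module ℝ V]
    [FiniteDimensional ℝ V] (hV : Module.finrank ℝ V = n)
    {F G H : ℕ → Submodule ℝ V} (hF : IsFlag n F)
    (hFGH : TransverseTriple n F G H)
    {i j k i' j' k' : ℕ} (hi : i < n) (hi' : i' < n) (hii' : i' ≤ i)
    (hijk : i + j + k = n) (hijk' : i' + j' + k' = n)
    (A B : Module.End ℝ V)
    (hA : IsEruption n i j k F G H A) (hB : IsEruption n i' j' k' F G H B) :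
    LinearMap.trace ℝ V (A * B) = (i' : ℝ) - (i : ℝ) * (i' : ℝ) / (n : ℝ) := by
  have hn : (n : ℝ) ≠ 0 := Nat.cast_ne_zero.mpr (by omega)
  set a : ℝ := (i : ℝ) / (n : ℝ) with ha
  set b : ℝ := (i' : ℝ) / (n : ℝ) with hb
  set P : Module.End ℝ V := A + a • (1 : Module.End ℝ V) with hP
  set Q : Module.End ℝ V := B + b • (1 : Module.End ℝ V) with hQ
  have hIP : LinearMap.IsProj (F i) P := eruption_proj hFGH hi hijk A hA
  have hIQ : LinearMap.IsProj (F i') Q := eruption_proj hFGH hi' hijk' B hB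
  have hPQ : P * Q = Q := by
    apply LinearMap.ext
    intro v
    exact hIP.map_id (Q v) (flag_mono hF hii' (le_of_lt hi) (hIQ.map_mem v))
  have htrP : LinearMap.trace ℝ V P = (i : ℝ) := by
    rw [hIP.trace, hF.2 i (le_of_lt hi)]
  have htrQ : LinearMap.trace ℝ V Q = (i' : ℝ) := by
    rw [hIQ.trace, hF.2 i' (le_of_lt hi')]
  have hAeq : A = P - a • (1 : Module.End ℝ V) := by rw [hP]; abel
  have hBeq : B = Q - b • (1 : Module.End ℝ V) := by rw [hQ]; abel
  have hexp : A * B = P * Q - b • P - a • Q + (a * b) • (1 : Module.End ℝ V) := by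
    rw [hAeq, hBeq]
    simp only [sub_mul, mul_sub, smul_mul_assoc, mul_smul_comm, one_mul, mul_one,
      smul_smul]
    module
  rw [hexp, hPQ]
  simp only [map_add, map_sub, map_smul, htrP, htrQ, LinearMap.trace_one, hV,
    smul_eq_mul]
  rw [ha, hb]
  field_simp
  ring

theorem statement8 (n : ℕ) (V : Type*) [AddCommGroup V] [Module ℝ V] [FiniteDimensional ℝ V]
    (hV : Module.finrank ℝ V = n)
    (F G H : ℕ → Submodule ℝ V) (hF : IsFlag n F) (hG : IsFlag n G) (hH : IsFlag n H)
    (hFGH : TransverseTriple n F G H)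
    (i j k i' j' k' : ℕ) (hi : i < n) (hj : j < n) (hk : k < n)
    (hi' : i' < n) (hj' : j' < n) (hk' : k' < n)
    (hijk : i + j + k = n) (hijk' : i' + j' + k' = n)
    (A B : Module.End ℝ V)
    (hA : IsEruption n i j k F G H A) (hB : IsEruption n i' j' k' F G H B) :
    LinearMap.trace ℝ V (A ∘ₗ B) =
      min (i : ℝ) (i' : ℝ) - (i : ℝ) * (i' : ℝ) / (n : ℝ) := by
  rw [show A ∘ₗ B = A * B from rfl]
  rcases le_total i' i with h | h
  · rw [min_eq_right (by exact_mod_cast h : (i' : ℝ) ≤ (i : ℝ))]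
    exact trace_key hV hF hFGH hi hi' h hijk hijk' A B hA hB
  · rw [min_eq_left (by exact_mod_cast h : (i : ℝ) ≤ (i' : ℝ)), LinearMap.trace_mul_comm]
    rw [show (i : ℝ) * (i' : ℝ) = (i' : ℝ) * (i : ℝ) from mul_comm _ _]
    exact trace_key hV hF hFGH hi' hi h hijk' hijk B A hB hA
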